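/- For every n ≥ 1, the sum over all permutations π of {1, …, n} of t^{gdes(π)} equals ∏_{k=1}^{n−1} (1 + k·t) as a polynomial identity in t (for n = 1 the empty product equals 1). -/

import Mathlib

open Finset

/-- The number of general descents of a permutation `π` of `{1,…,n}`:
positions `i` for which there exists a later position `j > i` with `π j < π i`. -/
def gdes {n : ℕ} (π : Equiv.Perm (Fin n)) : ℕ :=
  (Finset.univ.filter (fun i : Fin n => ∃ j : Fin n, i < j ∧ π j < π i)).card

/-- Insert the largest value at position `p` into a permutation `σ` of `Fin n`. -/
def insPerm {n : ℕ} (σ : Equiv.Perm (Fin n)) (p : Fin (n + 1)) : Equiv.Perm (Fin (n + 1)) :=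
  (finSuccEquiv' p).trans ((Equiv.optionCongr σ).trans (finSuccEquiv' (Fin.last n)).symm)

lemma insPerm_self {n : ℕ} (σ : Equiv.Perm (Fin n)) (p : Fin (n + 1)) :
    insPerm σ p p = Fin.last n := by
  simp [insPerm]

lemma insPerm_succAbove {n : ℕ} (σ : Equiv.Perm (Fin n)) (p : Fin (n + 1)) (i : Fin n) :
    insPerm σ p (p.succAbove i) = (σ i).castSucc := by
  simp [insPerm, finSuccEquiv'_symm_some, Fin.succAbove_last]

lemma gdes_insPerm {n : ℕ} (σ : Equiv.Perm (Fin n)) (p : Fin (n + 1)) :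
    gdes (insPerm σ p) = gdes σ + (if p = Fin.last n then 0 else 1) := by
  classical
  set π := insPerm σ p with hπ
  have hPp : (∃ j : Fin (n+1), p < j ∧ π j < π p) ↔ p ≠ Fin.last n := by
    constructor
    · rintro ⟨j, hpj, -⟩ h
      subst h
      exact absurd hpj (not_lt.mpr (Fin.le_last j))
    · intro h
      refine ⟨Fin.last n, Fin.lt_last_iff_ne_last.mpr h, ?_⟩
      rw [insPerm_self]
      have : π (Fin.last n) ≠ Fin.last n := fun hc =>
        h (π.injective (by rw [insPerm_self, hc]))
      exact Fin.lt_last_iff_ne_last.mpr this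
  have hPi : ∀ i : Fin n,
      (∃ j : Fin (n+1), p.succAbove i < j ∧ π j < π (p.succAbove i)) ↔
        (∃ j : Fin n, i < j ∧ σ j < σ i) := by
    intro i
    constructor
    · rintro ⟨j, hij, hlt⟩
      rw [insPerm_succAbove] at hlt
      have hjp : j ≠ p := by
        intro hc
        rw [hc, insPerm_self] at hlt
        exact absurd hlt (not_lt.mpr (Fin.le_last _))
      obtain ⟨j', rfl⟩ := Fin.exists_succAbove_eq hjp
      rw [insPerm_succAbove] at hlt
      exact ⟨j', Fin.succAbove_lt_succAbove_iff.mp hij, Fin.castSucc_lt_castSucc_iff.mp hlt⟩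
    · rintro ⟨j, hij, hlt⟩
      refine ⟨p.succAbove j, Fin.succAbove_lt_succAbove_iff.mpr hij, ?_⟩
      rw [insPerm_succAbove, insPerm_succAbove]
      exact Fin.castSucc_lt_castSucc_iff.mpr hlt
  unfold gdes
  rw [Finset.card_filter, Finset.card_filter,
    Fin.sum_univ_succAbove (fun i => if ∃ j : Fin (n+1), i < j ∧ π j < π i then 1 else 0) p]
  have h1 : (if ∃ j : Fin (n+1), p < j ∧ π j < π p then 1 else 0)
      = (if p = Fin.last n then 0 else 1) := by
    by_cases h : p = Fin.last n
    · rw [if_neg (fun hex => (hPp.mp hex) h), if_pos h]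
    · rw [if_pos (hPp.mpr h), if_neg h]
  have h2 : ∀ i : Fin n, (if ∃ j : Fin (n+1), p.succAbove i < j ∧ π j < π (p.succAbove i)
      then 1 else 0) = (if ∃ j : Fin n, i < j ∧ σ j < σ i then (1:ℕ) else 0) := by
    intro i; simp only [hPi]
  rw [h1]
  simp only [h2]
  ring

lemma insPerm_bijective (n : ℕ) :
    Function.Bijective (fun q : Equiv.Perm (Fin n) × Fin (n + 1) => insPerm q.1 q.2) := by
  rw [Fintype.bijective_iff_injective_and_card]
  constructor
  · rintro ⟨σ₁, p₁⟩ ⟨σ₂, p₂⟩ h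
    simp only at h
    have hp : p₁ = p₂ := by
      apply (insPerm σ₁ p₁).injective
      rw [insPerm_self, h, insPerm_self]
    subst hp
    have hσ : σ₁ = σ₂ := by
      ext i
      have h2 := congrArg (fun π : Equiv.Perm (Fin (n+1)) => π (p₁.succAbove i)) h
      simp only [insPerm_succAbove] at h2
      exact congrArg Fin.val (Fin.castSucc_injective n h2)
    rw [hσ]
  · simp [Fintype.card_perm, Nat.factorial_succ, mul_comm]

lemma sum_ind (n : ℕ) :
    ∑ p : Fin (n + 1), (if p = Fin.last n then (1 : Polynomial ℤ) else Polynomial.X)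
      = 1 + (n : Polynomial ℤ) * Polynomial.X := by
  rw [Fin.sum_univ_castSucc]
  have h1 : ∀ i : Fin n, (if (i.castSucc : Fin (n+1)) = Fin.last n then (1 : Polynomial ℤ)
      else Polynomial.X) = Polynomial.X := by
    intro i
    rw [if_neg (Fin.ne_last_of_lt (Fin.castSucc_lt_last i))]
  simp only [h1, if_pos rfl, if_true, Finset.sum_const, Finset.card_univ, Fintype.card_fin,
    nsmul_eq_mul]
  ring

theorem sum_gdes_range (n : ℕ) :
    ∑ π : Equiv.Perm (Fin n), (Polynomial.X : Polynomial ℤ) ^ gdes π =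
      ∏ k ∈ Finset.range n, (1 + (k : Polynomial ℤ) * Polynomial.X) := by
  induction n with
  | zero =>
    simp [gdes]
  | succ n ih =>
    rw [Finset.prod_range_succ, ← ih]
    rw [← Fintype.sum_bijective _ (insPerm_bijective n)
      (fun q : Equiv.Perm (Fin n) × Fin (n+1) =>
        (Polynomial.X : Polynomial ℤ) ^ gdes q.1 *
          (if q.2 = Fin.last n then 1 else Polynomial.X))
      (fun π => (Polynomial.X : Polynomial ℤ) ^ gdes π)
      (by
        rintro ⟨σ, p⟩
        simp only [gdes_insPerm, pow_add]
        by_cases h : p = Fin.last n <;> simp [h])]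
    rw [Fintype.sum_prod_type, ← sum_ind n, Finset.sum_mul_sum]

theorem sum_gdes_eq_prod (n : ℕ) (hn : 1 ≤ n) :
    ∑ π : Equiv.Perm (Fin n), (Polynomial.X : Polynomial ℤ) ^ gdes π =
      ∏ k ∈ Finset.Icc 1 (n - 1), (1 + (k : Polynomial ℤ) * Polynomial.X) := by
  rw [sum_gdes_range]
  obtain ⟨m, rfl⟩ := Nat.exists_eq_add_of_le hn
  have hset : (Finset.range (1 + m)).erase 0 = Finset.Icc 1 (1 + m - 1) := by
    ext k; simp; omega
  rw [← hset, ← Finset.mul_prod_erase (Finset.range (1 + m))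
    (fun k => (1 + (k : Polynomial ℤ) * Polynomial.X)) (show (0:ℕ) ∈ Finset.range (1+m) from Finset.mem_range.mpr (by omega))]
  simp
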